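/- Every group endomorphism h of ℋ_{f0} maps the center ℚ × 0 × 0 into itself. -/
import Mathlib


/-- The fibrewise rationalization of the discrete Heisenberg group: ℚ × ℤ × ℤ. -/
def Hf : Type := ℚ × ℤ × ℤ

namespace Hf

def mk (a : ℚ) (b c : ℤ) : Hf := (a, b, c)

@[simp] lemma fst_mk (a : ℚ) (b c : ℤ) : (mk a b c).1 = a := rfl
@[simp] lemma snd_fst_mk (a : ℚ) (b c : ℤ) : (mk a b c).2.1 = b := rfl
@[simp] lemma snd_snd_mk (a : ℚ) (b c : ℤ) : (mk a b c).2.2 = c := rfl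

lemma mk_inj {a x : ℚ} {b c y z : ℤ} : mk a b c = mk x y z ↔ a = x ∧ b = y ∧ c = z :=
  ⟨fun h => ⟨congrArg (fun p : Hf => p.1) h, congrArg (fun p : Hf => p.2.1) h,
      congrArg (fun p : Hf => p.2.2) h⟩,
   fun h => by rw [h.1, h.2.1, h.2.2]⟩

lemma eta (p : Hf) : p = mk p.1 p.2.1 p.2.2 := rfl

instance : One Hf := ⟨mk 0 0 0⟩
instance : Mul Hf :=
  ⟨fun p q => mk (p.1 + q.1 + (p.2.1 : ℚ) * (q.2.2 : ℚ)) (p.2.1 + q.2.1) (p.2.2 + q.2.2)⟩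
instance : Inv Hf :=
  ⟨fun p => mk (-p.1 + (p.2.1 : ℚ) * (p.2.2 : ℚ)) (-p.2.1) (-p.2.2)⟩

lemma mul_def (p q : Hf) :
    p * q = mk (p.1 + q.1 + (p.2.1 : ℚ) * (q.2.2 : ℚ)) (p.2.1 + q.2.1) (p.2.2 + q.2.2) := rfl
lemma one_def : (1 : Hf) = mk 0 0 0 := rfl
lemma inv_def (p : Hf) :
    p⁻¹ = mk (-p.1 + (p.2.1 : ℚ) * (p.2.2 : ℚ)) (-p.2.1) (-p.2.2) := rfl

instance instGroup : Group Hf := Group.ofLeftAxioms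
  (by intro p q r
      simp only [mul_def, fst_mk, snd_fst_mk, snd_snd_mk, mk_inj]
      refine ⟨by push_cast; ring, by ring, by ring⟩)
  (by intro p
      rw [eta p]
      simp only [mul_def, one_def, fst_mk, snd_fst_mk, snd_snd_mk, mk_inj]
      refine ⟨by push_cast; ring, by ring, by ring⟩)
  (by intro p
      simp only [mul_def, one_def, inv_def, fst_mk, snd_fst_mk, snd_snd_mk, mk_inj]
      refine ⟨by push_cast; ring, by ring, by ring⟩)

lemma mk_mul (a x : ℚ) (b c y z : ℤ) :
    mk a b c * mk x y z = mk (a + x + (b : ℚ) * (z : ℚ)) (b + y) (c + z) := by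
  simp [mul_def]

end Hf

lemma Hf.pow_snd (p : Hf) (n : ℕ) :
    (p ^ n).2.1 = n * p.2.1 ∧ (p ^ n).2.2 = n * p.2.2 := by
  induction n with
  | zero => simp [pow_zero, Hf.one_def]
  | succ n ih =>
    rw [pow_succ, Hf.mul_def]
    simp only [Hf.snd_fst_mk, Hf.snd_snd_mk, ih.1, ih.2]
    constructor <;> push_cast <;> ring

lemma Hf.mk_pow (a : ℚ) (n : ℕ) : (Hf.mk a 0 0) ^ n = Hf.mk (n * a) 0 0 := by
  induction n with
  | zero => simp [pow_zero, Hf.one_def]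
  | succ n ih =>
    rw [pow_succ, ih, Hf.mk_mul]
    simp only [Hf.mk_inj]
    refine ⟨by push_cast; ring, by ring, by ring⟩

/-- Every endomorphism of ℋ_{f0} maps the center ℚ × 0 × 0 into itself. -/
theorem hf_endo_preserves_center (h : Hf →* Hf) (q : ℚ) :
    ∃ r : ℚ, h (Hf.mk q 0 0) = Hf.mk r 0 0 := by
  set p : Hf := h (Hf.mk q 0 0) with hp
  have key : ∀ n : ℕ, ((n + 1 : ℕ) : ℤ) ∣ p.2.1 ∧ ((n + 1 : ℕ) : ℤ) ∣ p.2.2 := by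
    intro n
    have hne : ((n + 1 : ℕ) : ℚ) ≠ 0 := by positivity
    have hq : Hf.mk q 0 0 = (Hf.mk (q / (n + 1 : ℕ)) 0 0) ^ (n + 1) := by
      rw [Hf.mk_pow, Hf.mk_inj]
      exact ⟨by field_simp, rfl, rfl⟩
    have hpe : p = (h (Hf.mk (q / (n + 1 : ℕ)) 0 0)) ^ (n + 1) := by
      rw [hp, hq, map_pow]
    obtain ⟨h1, h2⟩ := Hf.pow_snd (h (Hf.mk (q / (n + 1 : ℕ)) 0 0)) (n + 1)
    rw [← hpe] at h1 h2
    exact ⟨⟨_, h1⟩, ⟨_, h2⟩⟩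
  have hz : ∀ m : ℤ, (∀ n : ℕ, ((n + 1 : ℕ) : ℤ) ∣ m) → m = 0 := by
    intro m hm
    have := hm m.natAbs
    by_contra h0
    have hd := Int.le_of_dvd (abs_pos.mpr h0) ((dvd_abs _ _).mpr this)
    rw [Int.abs_eq_natAbs] at hd
    push_cast at hd
    omega
  have h1 : p.2.1 = 0 := hz _ fun n => (key n).1
  have h2 : p.2.2 = 0 := hz _ fun n => (key n).2
  exact ⟨p.1, by rw [Hf.eta p, h1, h2]; rfl⟩
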